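/- Any simple graph on 9 vertices in which every 5-vertex subset contains at least 2 edges has at least 9 edges. -/

import Mathlib

open scoped Classical

/-- The number of edges of `G` with both endpoints in `S`. -/
noncomputable def edgesIn {n : ℕ} (G : SimpleGraph (Fin n)) (S : Finset (Fin n)) : ℕ :=
  (G.edgeFinset.filter (fun e => ∀ v ∈ e, v ∈ S)).card

/-- Every 5-vertex subset spans at least 2 edges. -/
def Spans2 {n : ℕ} (G : SimpleGraph (Fin n)) : Prop :=
  ∀ S : Finset (Fin n), S.card = 5 → 2 ≤ edgesIn G S

/-- Greedy recursion predicate. -/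
def gp : ℕ → ℕ → ℕ → Bool
  | 0, _, _ => true
  | k+1, n, e => decide (0 < n) &&
      ((List.range (2*e+1)).all fun d => !(decide (d*n ≤ 2*e)) || gp k (n-1-d) (e-d))

/-- Restriction of `G` to `S`. -/
def Gr {n : ℕ} (G : SimpleGraph (Fin n)) (S : Finset (Fin n)) : SimpleGraph (Fin n) where
  Adj x y := G.Adj x y ∧ x ∈ S ∧ y ∈ S
  symm := ⟨by rintro x y ⟨h, hx, hy⟩; exact ⟨h.symm, hy, hx⟩⟩
  loopless := ⟨by rintro x ⟨h, _⟩; exact G.irrefl h⟩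

lemma edgesIn_eq {n : ℕ} (G : SimpleGraph (Fin n)) (S : Finset (Fin n)) :
    edgesIn G S = (Gr G S).edgeFinset.card := by
  unfold edgesIn
  congr 1
  ext e
  induction e using Sym2.ind with
  | _ a b =>
    simp only [Finset.mem_filter, SimpleGraph.mem_edgeFinset, SimpleGraph.mem_edgeSet,
      Sym2.mem_iff]
    simp only [Gr]
    constructor
    · rintro ⟨h, hS⟩
      exact ⟨h, hS a (Or.inl rfl), hS b (Or.inr rfl)⟩
    · rintro ⟨h, ha, hb⟩
      exact ⟨h, fun v hv => by rcases hv with rfl | rfl <;> assumption⟩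

lemma greedy {G : SimpleGraph (Fin 9)} :
    ∀ (k n e : ℕ) (S : Finset (Fin 9)), n ≤ S.card → edgesIn G S ≤ e → gp k n e = true →
    ∃ T ⊆ S, T.card = k ∧ ∀ x ∈ T, ∀ y ∈ T, ¬ G.Adj x y := by
  intro k
  induction k with
  | zero =>
    intro n e S _ _ _
    exact ⟨∅, Finset.empty_subset _, Finset.card_empty, by simp⟩
  | succ k ih =>
    intro n e S hn he hgp
    simp only [gp, Bool.and_eq_true, decide_eq_true_eq, List.all_eq_true] at hgp
    obtain ⟨hn0, hstep⟩ := hgp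
    -- S is nonempty
    have hS0 : 0 < S.card := lt_of_lt_of_le hn0 hn
    have hSne : S.Nonempty := Finset.card_pos.mp hS0
    -- pick min degree vertex in restriction
    obtain ⟨v, hv, hvmin⟩ := S.exists_min_image (fun x => (Gr G S).degree x) hSne
    set d := (Gr G S).degree v with hd
    -- handshake bound : d * S.card ≤ 2 * edgesIn G S
    have hsum : ∑ u : Fin 9, (Gr G S).degree u = 2 * edgesIn G S := by
      rw [edgesIn_eq]; exact SimpleGraph.sum_degrees_eq_twice_card_edges _
    have hdS : d * S.card ≤ 2 * edgesIn G S := by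
      calc d * S.card = ∑ _u ∈ S, d := by rw [Finset.sum_const, smul_eq_mul, mul_comm]
        _ ≤ ∑ u ∈ S, (Gr G S).degree u := Finset.sum_le_sum (fun u hu => hvmin u hu)
        _ ≤ ∑ u : Fin 9, (Gr G S).degree u :=
            Finset.sum_le_sum_of_subset (Finset.subset_univ S)
        _ = 2 * edgesIn G S := hsum
    have hdn : d * n ≤ 2 * e := by
      calc d * n ≤ d * S.card := Nat.mul_le_mul_left d hn
        _ ≤ 2 * edgesIn G S := hdS
        _ ≤ 2 * e := by omega
    have hdle : d ≤ 2 * e := by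
      have : d * 1 ≤ d * n := Nat.mul_le_mul_left d hn0
      omega
    have hrec : gp k (n-1-d) (e-d) = true := by
      have := hstep d (by simp [List.mem_range]; omega)
      simp only [Bool.or_eq_true, Bool.not_eq_true', decide_eq_false_iff_not] at this
      rcases this with h | h
      · exact absurd hdn h
      · exact h
    -- degree of v equals card of its neighbors in S
    have hdeq : d = (S.filter (fun x => G.Adj v x)).card := by
      rw [hd, SimpleGraph.degree]
      congr 1
      ext x
      simp only [SimpleGraph.mem_neighborFinset, Finset.mem_filter, Finset.mem_univ, true_and]
      simp only [Gr]
      exact ⟨fun ⟨h, _, hx⟩ => ⟨hx, h⟩, fun ⟨hx, h⟩ => ⟨h, hv, hx⟩⟩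
    -- new set
    set S' := S.filter (fun x => ¬ G.Adj v x ∧ x ≠ v) with hS'
    have hS'sub : S' ⊆ S := Finset.filter_subset _ _
    have hvnot : v ∉ S' := by simp [hS']
    -- cardinality bound
    have hcard : n - 1 - d ≤ S'.card := by
      have hsub : S ⊆ S' ∪ insert v (S.filter (fun x => G.Adj v x)) := by
        intro x hx
        by_cases h1 : G.Adj v x
        · exact Finset.mem_union_right _ (Finset.mem_insert_of_mem (by simp [hx, h1]))
        · by_cases h2 : x = v
          · exact Finset.mem_union_right _ (by simp [h2])
          · exact Finset.mem_union_left _ (by simp [hS', hx, h1, h2])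
      have := Finset.card_le_card hsub
      have h2 := Finset.card_union_le S' (insert v (S.filter (fun x => G.Adj v x)))
      have h3 := Finset.card_insert_le v (S.filter (fun x => G.Adj v x))
      omega
    -- edge bound
    have hedge : edgesIn G S' ≤ e - d := by
      have hle : Gr G S' ≤ Gr G S := by
        intro x y ⟨h, hx, hy⟩; exact ⟨h, hS'sub hx, hS'sub hy⟩
      have hA : (Gr G S').edgeFinset ⊆ (Gr G S).edgeFinset :=
        SimpleGraph.edgeFinset_subset_edgeFinset.mpr hle
      have hB : (Gr G S).incidenceFinset v ⊆ (Gr G S).edgeFinset := by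
        intro e he
        rw [SimpleGraph.mem_incidenceFinset] at he
        exact SimpleGraph.mem_edgeFinset.mpr he.1
      have hdisj : Disjoint ((Gr G S').edgeFinset) ((Gr G S).incidenceFinset v) := by
        rw [Finset.disjoint_left]
        intro e heA heB
        rw [SimpleGraph.mem_incidenceFinset] at heB
        have hvmem : v ∈ e := heB.2
        induction e using Sym2.ind with
        | _ a b =>
          rw [SimpleGraph.mem_edgeFinset, SimpleGraph.mem_edgeSet] at heA
          obtain ⟨_, ha, hb⟩ := heA
          rcases Sym2.mem_iff.mp hvmem with rfl | rfl
          · exact hvnot ha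
          · exact hvnot hb
      have hu : (Gr G S').edgeFinset ∪ (Gr G S).incidenceFinset v ⊆ (Gr G S).edgeFinset :=
        Finset.union_subset hA hB
      have hcards := Finset.card_le_card hu
      rw [Finset.card_union_of_disjoint hdisj] at hcards
      have hinc : ((Gr G S).incidenceFinset v).card = d := by
        rw [SimpleGraph.card_incidenceFinset_eq_degree]
      rw [edgesIn_eq] at he ⊢
      omega
    obtain ⟨T', hT'sub, hT'card, hT'ind⟩ := ih (n-1-d) (e-d) S' hcard hedge hrec
    have hvT' : v ∉ T' := fun h => hvnot (hT'sub h)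
    refine ⟨insert v T', ?_, ?_, ?_⟩
    · exact Finset.insert_subset hv (hT'sub.trans hS'sub)
    · rw [Finset.card_insert_of_notMem hvT', hT'card]
    · intro x hx y hy
      rw [Finset.mem_insert] at hx hy
      rcases hx with rfl | hx
      · rcases hy with rfl | hy
        · exact G.irrefl
        · have hy' := hT'sub hy
          simp only [hS', Finset.mem_filter] at hy'
          exact hy'.2.1
      · rcases hy with rfl | hy
        · have hx' := hT'sub hx
          simp only [hS', Finset.mem_filter] at hx'
          exact fun hadj => hx'.2.1 hadj.symm
        · exact hT'ind x hx y hy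

lemma ten_edges {G : SimpleGraph (Fin 9)} (hG : Spans2 G) (T : Finset (Fin 9))
    (hT : T.card = 4) (hind : ∀ x ∈ T, ∀ y ∈ T, ¬ G.Adj x y) :
    10 ≤ G.edgeFinset.card := by
  set W := Tᶜ with hW
  have hWcard : W.card = 5 := by
    rw [hW, Finset.card_compl, hT]
    simp
  set F : Fin 9 → Finset (Sym2 (Fin 9)) :=
    fun w => G.edgeFinset.filter (fun e => ∀ v ∈ e, v ∈ insert w T) with hF
  have hFcard : ∀ w ∈ W, 2 ≤ (F w).card := by
    intro w hw
    have hwT : w ∉ T := by simpa [hW] using hw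
    have : (insert w T).card = 5 := by rw [Finset.card_insert_of_notMem hwT, hT]
    exact hG (insert w T) this
  have hdisj : ∀ w ∈ W, ∀ w' ∈ W, w ≠ w' → Disjoint (F w) (F w') := by
    intro w _ w' _ hww
    rw [Finset.disjoint_left]
    intro e he he'
    simp only [hF, Finset.mem_filter, SimpleGraph.mem_edgeFinset] at he he'
    obtain ⟨hee, hmem⟩ := he
    obtain ⟨_, hmem'⟩ := he'
    induction e using Sym2.ind with
    | _ a b =>
      have hadj : G.Adj a b := (SimpleGraph.mem_edgeSet G).mp hee
      have haT : a ∈ T := by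
        have h1 := hmem a (Sym2.mem_mk_left a b)
        have h2 := hmem' a (Sym2.mem_mk_left a b)
        rcases Finset.mem_insert.mp h1 with rfl | h1
        · rcases Finset.mem_insert.mp h2 with rfl | h2
          · exact absurd rfl hww
          · exact h2
        · exact h1
      have hbT : b ∈ T := by
        have h1 := hmem b (Sym2.mem_mk_right a b)
        have h2 := hmem' b (Sym2.mem_mk_right a b)
        rcases Finset.mem_insert.mp h1 with rfl | h1
        · rcases Finset.mem_insert.mp h2 with rfl | h2
          · exact absurd rfl hww
          · exact h2
        · exact h1
      exact hind a haT b hbT hadj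
  have hbu : W.biUnion F ⊆ G.edgeFinset := by
    intro e he
    obtain ⟨w, _, hw⟩ := Finset.mem_biUnion.mp he
    exact (Finset.mem_filter.mp hw).1
  calc 10 = ∑ _w ∈ W, 2 := by rw [Finset.sum_const, hWcard]; rfl
    _ ≤ ∑ w ∈ W, (F w).card := Finset.sum_le_sum hFcard
    _ = (W.biUnion F).card := (Finset.card_biUnion hdisj).symm
    _ ≤ G.edgeFinset.card := Finset.card_le_card hbu

theorem stmt_6 (G : SimpleGraph (Fin 9)) (hG : Spans2 G) :
    9 ≤ G.edgeFinset.card := by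
  by_contra h
  push_neg at h
  have he : edgesIn G Finset.univ ≤ 8 := by
    unfold edgesIn
    have : G.edgeFinset.filter (fun e => ∀ v ∈ e, v ∈ (Finset.univ : Finset (Fin 9)))
        = G.edgeFinset := by
      apply Finset.filter_true_of_mem
      intro e _ v _
      exact Finset.mem_univ v
    rw [this]
    omega
  have hn : 9 ≤ (Finset.univ : Finset (Fin 9)).card := by simp
  obtain ⟨T, _, hTcard, hTind⟩ := greedy 4 9 8 Finset.univ hn he (by decide)
  have := ten_edges hG T hTcard hTind
  omega
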